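/- Let d ≥ 1, let f : ℝ^d → ℝ be Lipschitz continuous and strictly increasing under scalar translation (SISTr), and let ℓ ∈ ℝ. Then for every x ∈ ℝ^d there exists a unique real number c_x such that f(x + c_x·𝟏) = ℓ, and the map x ↦ c_x is continuous on ℝ^d. -/
import Mathlib


/-- `g` is strictly increasing under scalar translation at the point `x`:
the map `c ↦ g (x + c • 𝟏)` is strictly increasing and maps `ℝ` onto `ℝ`. -/
def SISTrAt {d : ℕ} (g : (Fin d → ℝ) → ℝ) (x : Fin d → ℝ) : Prop :=
  StrictMono (fun c : ℝ => g (x + c • (1 : Fin d → ℝ))) ∧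
  Function.Surjective (fun c : ℝ => g (x + c • (1 : Fin d → ℝ)))

/-- `g` is strictly increasing under scalar translation (SISTr). -/
def SISTr {d : ℕ} (g : (Fin d → ℝ) → ℝ) : Prop := ∀ x, SISTrAt g x

theorem stmt0 (d : ℕ) (hd : 1 ≤ d) (f : (Fin d → ℝ) → ℝ)
    (hLip : ∃ K : NNReal, LipschitzWith K f) (hSISTr : SISTr f) (ℓ : ℝ) :
    ∃ c : (Fin d → ℝ) → ℝ, Continuous c ∧
      ∀ x : Fin d → ℝ, f (x + c x • (1 : Fin d → ℝ)) = ℓ ∧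
        ∀ c' : ℝ, f (x + c' • (1 : Fin d → ℝ)) = ℓ → c' = c x := by
  classical
  obtain ⟨K, hK⟩ := hLip
  have hfc : Continuous f := hK.continuous
  set c : (Fin d → ℝ) → ℝ := fun x => Classical.choose ((hSISTr x).2 ℓ) with hc
  have hcspec : ∀ x, f (x + c x • (1 : Fin d → ℝ)) = ℓ := fun x =>
    Classical.choose_spec ((hSISTr x).2 ℓ)
  have huniq : ∀ x c', f (x + c' • (1 : Fin d → ℝ)) = ℓ → c' = c x := by
    intro x c' h
    exact (hSISTr x).1.injective (h.trans (hcspec x).symm)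
  refine ⟨c, ?_, fun x => ⟨hcspec x, huniq x⟩⟩
  rw [Metric.continuous_iff]
  intro x ε hε
  have h1 : f (x + (c x - ε) • (1 : Fin d → ℝ)) < ℓ := by
    conv_rhs => rw [← hcspec x]
    exact (hSISTr x).1 (by linarith)
  have h2 : ℓ < f (x + (c x + ε) • (1 : Fin d → ℝ)) := by
    conv_lhs => rw [← hcspec x]
    exact (hSISTr x).1 (by linarith)
  have hg1 : Continuous fun y : Fin d → ℝ => f (y + (c x - ε) • (1 : Fin d → ℝ)) :=
    hfc.comp (continuous_id.add continuous_const)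
  have hg2 : Continuous fun y : Fin d → ℝ => f (y + (c x + ε) • (1 : Fin d → ℝ)) :=
    hfc.comp (continuous_id.add continuous_const)
  have hopen : IsOpen ({y | f (y + (c x - ε) • (1 : Fin d → ℝ)) < ℓ} ∩
      {y | ℓ < f (y + (c x + ε) • (1 : Fin d → ℝ))}) :=
    (isOpen_lt hg1 continuous_const).inter (isOpen_lt continuous_const hg2)
  have hmem : x ∈ ({y | f (y + (c x - ε) • (1 : Fin d → ℝ)) < ℓ} ∩ {y | ℓ < f (y + (c x + ε) • (1 : Fin d → ℝ))}) := ⟨h1, h2⟩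
  obtain ⟨δ, hδ, hball⟩ := Metric.isOpen_iff.mp hopen x hmem
  refine ⟨δ, hδ, fun y hy => ?_⟩
  have hy' := hball (Metric.mem_ball.mpr hy)
  obtain ⟨hy1, hy2⟩ := hy'
  have hlt1 : c x - ε < c y := by
    have : f (y + (c x - ε) • (1 : Fin d → ℝ)) < f (y + c y • (1 : Fin d → ℝ)) := by
      rw [hcspec y]; exact hy1
    exact (hSISTr y).1.lt_iff_lt.mp this
  have hlt2 : c y < c x + ε := by
    have : f (y + c y • (1 : Fin d → ℝ)) < f (y + (c x + ε) • (1 : Fin d → ℝ)) := by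
      rw [hcspec y]; exact hy2
    exact (hSISTr y).1.lt_iff_lt.mp this
  rw [Real.dist_eq]
  rw [abs_lt]
  constructor <;> linarith
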